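/- arXiv:1701.06614 — 4 statements merged into one kernel-verified Lean document; each statement's English description precedes it below -/
import Mathlib

section
/- For coprime integers a, q with q > 0, the number of pairs (m, n) with 0 < m, n < q, a·m ≡ n (mod q), and m·n < q equals the number of pairs (c, d) ∈ ℤ² with d > 0 and 0 < a/q − c/d < 1/d². -/
/-- `S a q` counts pairs `(m, n)` with `0 < m, n < q`, `a*m ≡ n (mod q)` and `m*n < q`. -/
noncomputable def S (a q : ℤ) : ℕ :=
  ((Finset.Ioo 0 q ×ˢ Finset.Ioo 0 q).filter
    (fun p => a * p.1 % q = p.2 % q ∧ p.1 * p.2 < q)).card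

lemma rat_iff (a q c d : ℤ) (hq : 0 < q) (hd : 0 < d) :
    (0 < (a : ℚ) / q - (c : ℚ) / d ∧ (a : ℚ) / q - (c : ℚ) / d < 1 / (d : ℚ) ^ 2) ↔
      (0 < a * d - c * q ∧ d * (a * d - c * q) < q) := by
  have hq' : (0:ℚ) < (q:ℚ) := by exact_mod_cast hq
  have hd' : (0:ℚ) < (d:ℚ) := by exact_mod_cast hd
  have key : (a : ℚ) / q - (c : ℚ) / d = ((a * d - c * q : ℤ) : ℚ) / ((q * d : ℤ) : ℚ) := by
    push_cast
    field_simp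
  rw [key]
  have hqd : (0:ℚ) < ((q * d : ℤ) : ℚ) := by positivity
  constructor
  · rintro ⟨h1, h2⟩
    have h1' : (0:ℚ) < ((a * d - c * q : ℤ) : ℚ) := by
      by_contra h
      push_neg at h
      nlinarith [div_nonpos_of_nonpos_of_nonneg h hqd.le]
    have h1'' : 0 < a * d - c * q := by exact_mod_cast h1'
    refine ⟨h1'', ?_⟩
    rw [div_lt_div_iff₀ hqd (by positivity)] at h2
    have : ((d : ℚ) * ((a * d - c * q : ℤ) : ℚ)) * (d:ℚ) < (q:ℚ) * (d:ℚ) := by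
      push_cast at h2 ⊢
      nlinarith
    have := lt_of_mul_lt_mul_right this hd'.le
    exact_mod_cast this
  · rintro ⟨h1, h2⟩
    have h1' : (0:ℚ) < ((a * d - c * q : ℤ) : ℚ) := by exact_mod_cast h1
    have h2' : ((d : ℤ) : ℚ) * ((a * d - c * q : ℤ) : ℚ) < (q:ℚ) := by exact_mod_cast h2
    refine ⟨div_pos h1' hqd, ?_⟩
    rw [div_lt_div_iff₀ hqd (by positivity)]
    push_cast at h2' ⊢
    nlinarith

theorem stmt_0 (a q : ℤ) (hq : 0 < q) (hco : Int.gcd a q = 1) :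
    (S a q : ℕ) =
      Set.ncard {p : ℤ × ℤ | 0 < p.2 ∧ 0 < (a : ℚ) / q - (p.1 : ℚ) / p.2 ∧
        (a : ℚ) / q - (p.1 : ℚ) / p.2 < 1 / (p.2 : ℚ) ^ 2} := by
  classical
  set F := (Finset.Ioo 0 q ×ˢ Finset.Ioo 0 q).filter
    (fun p : ℤ × ℤ => a * p.1 % q = p.2 % q ∧ p.1 * p.2 < q) with hF
  set g : ℤ × ℤ → ℤ × ℤ := fun p => ((a * p.1 - p.2) / q, p.1) with hg
  have hmemF : ∀ p : ℤ × ℤ, p ∈ F ↔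
      (0 < p.1 ∧ p.1 < q) ∧ (0 < p.2 ∧ p.2 < q) ∧ a * p.1 % q = p.2 % q ∧ p.1 * p.2 < q := by
    intro p
    simp [hF, Finset.mem_filter, Finset.mem_product, and_assoc]
  have hset : {p : ℤ × ℤ | 0 < p.2 ∧ 0 < (a : ℚ) / q - (p.1 : ℚ) / p.2 ∧
        (a : ℚ) / q - (p.1 : ℚ) / p.2 < 1 / (p.2 : ℚ) ^ 2} = ↑(F.image g) := by
    ext ⟨c, d⟩
    simp only [Set.mem_setOf_eq, Finset.coe_image, Set.mem_image, Finset.mem_coe]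
    constructor
    · rintro ⟨hd, h1, h2⟩
      obtain ⟨hn, hdn⟩ := (rat_iff a q c d hq hd).mp ⟨h1, h2⟩
      set n := a * d - c * q with hn'
      refine ⟨(d, n), ?_, ?_⟩
      · rw [hmemF]
        refine ⟨⟨hd, ?_⟩, ⟨hn, ?_⟩, ?_, hdn⟩
        · nlinarith
        · nlinarith
        · have : a * d = n + c * q := by ring
          rw [this]
          simp [Int.add_mul_emod_self_left]
      · simp only [hg]
        have : a * d - n = c * q := by ring
        rw [this, Int.mul_ediv_cancel _ hq.ne']
    · rintro ⟨⟨m, n⟩, hmn, hgeq⟩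
      rw [hmemF] at hmn
      obtain ⟨⟨hm, hmq⟩, ⟨hn, hnq⟩, hmod, hprod⟩ := hmn
      simp only [hg, Prod.mk.injEq] at hgeq
      obtain ⟨hc, hd⟩ := hgeq
      subst hd
      have hdvd : q ∣ a * m - n := by
        have : a * m ≡ n [ZMOD q] := hmod
        exact (Int.modEq_iff_dvd.mp this.symm)
      have hc' : c * q = a * m - n := by
        rw [← hc, Int.ediv_mul_cancel hdvd]
      have hn2 : a * m - c * q = n := by omega
      refine ⟨hm, (rat_iff a q c m hq hm).mpr ⟨?_, ?_⟩⟩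
      · omega
      · rw [hn2]; nlinarith
  rw [hset, Set.ncard_coe_finset]
  have hinj : Set.InjOn g ↑F := by
    intro p hp p' hp' heq
    rw [Finset.mem_coe, hmemF] at hp hp'
    simp only [hg, Prod.mk.injEq] at heq
    obtain ⟨h1, h2⟩ := heq
    have d1 : q ∣ a * p.1 - p.2 := by
      have : a * p.1 ≡ p.2 [ZMOD q] := hp.2.2.1
      exact (Int.modEq_iff_dvd.mp this.symm)
    have d2 : q ∣ a * p'.1 - p'.2 := by
      have : a * p'.1 ≡ p'.2 [ZMOD q] := hp'.2.2.1
      exact (Int.modEq_iff_dvd.mp this.symm)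
    have e1 : (a * p.1 - p.2) / q * q = a * p.1 - p.2 := Int.ediv_mul_cancel d1
    have e2 : (a * p'.1 - p'.2) / q * q = a * p'.1 - p'.2 := Int.ediv_mul_cancel d2
    have : a * p.1 - p.2 = a * p'.1 - p'.2 := by rw [← e1, ← e2, h1]
    have h3 : a * p.1 = a * p'.1 := by rw [h2]
    have : p.2 = p'.2 := by omega
    exact Prod.ext h2 this
  rw [Finset.card_image_of_injOn hinj]
  rfl
end

section
/- Let a/q be a rational with continued fraction expansion [b₀; b₁, …, b_k] and convergents h_j/k_j for −1 ≤ j ≤ k. Every reduced fraction c/d with d > 0 satisfying 0 ≠ |a/q − c/d| < 1/d² is either a convergent h_j/k_j (−1 ≤ j ≤ k−1) or a semiconvergent (h_j + g·h_{j+1})/(k_j + g·k_{j+1}) with g = 1 or g = b_{j+2} − 1 (−1 ≤ j ≤ k−2). Moreover, in both cases c/d < a/q if and only if j is even. -/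
/-- Value of the continued fraction `[b₀; b₁, …, b_k]`. -/
def cfVal : ℤ → List ℤ → ℚ
  | b0, [] => (b0 : ℚ)
  | b0, b :: bs => (b0 : ℚ) + (cfVal b bs)⁻¹

/-- Numerators of the convergents of `[b₀; b₁, …, b_k]` (given as a list `l`):
`cnum l (j+1) = h_j`, with the convention `cnum l 0 = h_{-1} = 1`. -/
def cnum (l : List ℤ) : ℕ → ℤ
  | 0 => 1
  | 1 => l.getD 0 0
  | n + 2 => l.getD (n + 1) 0 * cnum l (n + 1) + cnum l n

/-- Denominators of the convergents: `cden l (j+1) = k_j`, with `cden l 0 = k_{-1} = 0`. -/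
def cden (l : List ℤ) : ℕ → ℤ
  | 0 => 0
  | 1 => 1
  | n + 2 => l.getD (n + 1) 0 * cden l (n + 1) + cden l n

lemma cnum_two (l : List ℤ) (n : ℕ) :
    cnum l (n+2) = l.getD (n + 1) 0 * cnum l (n + 1) + cnum l n := rfl
lemma cden_two (l : List ℤ) (n : ℕ) :
    cden l (n+2) = l.getD (n + 1) 0 * cden l (n + 1) + cden l n := rfl

lemma cfVal_ge_one (b : ℤ) (L : List ℤ) (hb : 1 ≤ b) (hL : ∀ y ∈ L, 1 ≤ y) : 1 ≤ cfVal b L := by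
  induction L generalizing b with
  | nil => simp [cfVal]; exact_mod_cast hb
  | cons c r ih =>
    have h1 : 1 ≤ cfVal c r := ih c (hL c (by simp)) (fun y hy => hL y (by simp [hy]))
    have h2 : (0:ℚ) ≤ (cfVal c r)⁻¹ := inv_nonneg.2 (by linarith)
    have : (1:ℚ) ≤ (b:ℚ) := by exact_mod_cast hb
    simp only [cfVal]
    linarith

lemma cf_det (l : List ℤ) : ∀ n, cnum l (n+1) * cden l n - cnum l n * cden l (n+1) = (-1)^(n+1) := by
  intro n
  induction n with
  | zero => simp [cnum, cden]
  | succ n ih =>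
    rw [cnum_two, cden_two]
    ring_nf
    ring_nf at ih
    linear_combination (-1 : ℤ) * ih

lemma cden_nonneg (l : List ℤ) (hl : ∀ i, 1 ≤ i → i < l.length → 1 ≤ l.getD i 0) :
    ∀ m, m ≤ l.length → 0 ≤ cden l m ∧ (1 ≤ m → 1 ≤ cden l m) := by
  intro m
  induction m using Nat.twoStepInduction with
  | zero => simp [cden]
  | one => simp [cden]
  | more n ih1 ih2 =>
    intro h
    have h1 := ih1 (by omega)
    have h2 := ih2 (by omega)
    have hb := hl (n+1) (by omega) (by omega)
    rw [cden_two]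
    constructor
    · nlinarith [h1.1, h2.1]
    · intro _
      nlinarith [h2.2 (by omega), h1.1]

set_option maxHeartbeats 4000000 in
/-- Every good rational approximation of `x = [b₀; b₁, …, b_k]` is a convergent or one of two
special semiconvergents; indices are shifted by one, so `i = j + 1` with `-1 ≤ j`. -/
theorem stmt_6 (b0 : ℤ) (bs : List ℤ) (hpos : ∀ b ∈ bs, 1 ≤ b)
    (x : ℚ) (hx : x = cfVal b0 bs)
    (c d : ℤ) (hd : 0 < d) (hcd : Int.gcd c d = 1)
    (h0 : (c : ℚ) / d ≠ x) (happ : |x - (c : ℚ) / d| < 1 / (d : ℚ) ^ 2) :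
    (∃ i ≤ bs.length, (c : ℚ) / d = (cnum (b0 :: bs) i : ℚ) / (cden (b0 :: bs) i : ℚ) ∧
        ((c : ℚ) / d < x ↔ Odd i)) ∨
      (∃ i ≤ bs.length - 1, ∃ g : ℤ,
        (g = 1 ∨ g = (b0 :: bs).getD (i + 1) 0 - 1) ∧
        (c : ℚ) / d = ((cnum (b0 :: bs) i + g * cnum (b0 :: bs) (i + 1) : ℤ) : ℚ) /
          ((cden (b0 :: bs) i + g * cden (b0 :: bs) (i + 1) : ℤ) : ℚ) ∧
        ((c : ℚ) / d < x ↔ Odd i)) := by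
  have hdq : (1:ℚ) ≤ (d:ℚ) := by exact_mod_cast hd
  have hdQ : (0:ℚ) < (d:ℚ) := by linarith
  rcases bs with _ | ⟨b1, rest⟩
  · -- trivial case: x is an integer, contradiction
    exfalso
    have h1 : x - (c:ℚ)/d = ((b0*d - c : ℤ) : ℚ)/d := by
      rw [hx]; show (b0:ℚ) - _ = _; push_cast; field_simp
    have hM : (b0*d - c : ℤ) ≠ 0 := by
      intro h
      apply h0
      have : (b0:ℚ)*d - c = 0 := by exact_mod_cast congrArg (Int.cast : ℤ → ℚ) h
      rw [hx]; show (c:ℚ)/d = (b0:ℚ)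
      rw [div_eq_iff (ne_of_gt hdQ)]; linarith
    have habs : (1:ℚ) ≤ |((b0*d - c:ℤ):ℚ)| := by
      have := Int.one_le_abs hM
      calc (1:ℚ) ≤ ((|b0*d - c| : ℤ) : ℚ) := by exact_mod_cast this
      _ = _ := by push_cast [Int.cast_abs]; ring_nf
    rw [h1, abs_div, abs_of_pos hdQ, div_lt_div_iff₀ hdQ (by positivity)] at happ
    nlinarith [habs, hdq]
  · set l : List ℤ := b0 :: b1 :: rest with hl_def
    set K := rest.length with hK_def
    have hlen : l.length = K + 2 := by simp [hl_def, hK_def]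
    have hl : ∀ i, 1 ≤ i → i < l.length → 1 ≤ l.getD i 0 := by
      intro i h1 h2
      match i, h1 with
      | (j+1), _ =>
        have hj : j < (b1::rest).length := by
          simp only [List.length_cons] at h2 ⊢
          simp only [hlen] at h2
          omega
        have he : l.getD (j+1) 0 = (b1::rest).getD j 0 := rfl
        rw [he, List.getD_eq_getElem _ _ hj]
        exact hpos _ (List.getElem_mem hj)
    have hKD := cden_nonneg l hl
    have hKmono : ∀ m, m + 1 ≤ l.length → cden l m ≤ cden l (m+1) := by
      intro m hm
      match m with
      | 0 => simp [cden]
      | (i+1) =>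
        rw [cden_two]
        have hb := hl (i+1) (by omega) (by omega)
        have h1 := (hKD (i+1) (by omega)).2 (by omega)
        have h2 := (hKD i (by omega)).1
        nlinarith
    set T : ℕ → ℚ := fun j => cfVal (l.getD j 0) (l.drop (j+1)) with hT_def
    have hT0 : T 0 = x := by
      rw [hT_def]
      show cfVal (l.getD 0 0) (l.drop 1) = x
      simp [hl_def, hx]
    have hTstep : ∀ j, j + 1 < l.length → T j = (l.getD j 0 : ℚ) + (T (j+1))⁻¹ := by
      intro j hj
      have h1 : l.drop (j+1) = l.getD (j+1) 0 :: l.drop (j+2) := by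
        rw [List.drop_eq_getElem_cons hj, List.getD_eq_getElem _ _ hj]
      show cfVal _ _ = _
      rw [h1]
      rfl
    have hTpos : ∀ j, 1 ≤ j → j + 1 ≤ l.length → 1 ≤ T j := by
      intro j h1 h2
      apply cfVal_ge_one
      · exact hl j h1 (by omega)
      · intro y hy
        have hsub : l.drop (j+1) ⊆ (b1::rest) := by
          match j, h1 with
          | (i+1), _ =>
            show ((b0 :: (b1::rest)).drop (i+2)) ⊆ _
            rw [List.drop_succ_cons]
            exact List.drop_subset _ _
        exact hpos y (hsub hy)
    have hC : ∀ m, m + 1 < l.length →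
        x * (T (m+1) * ((cden l (m+1) : ℤ) : ℚ) + ((cden l m : ℤ) : ℚ)) =
          T (m+1) * ((cnum l (m+1) : ℤ) : ℚ) + ((cnum l m : ℤ) : ℚ) := by
      intro m
      induction m with
      | zero =>
        intro h
        have h1 := hTstep 0 (by omega)
        have hx1 : x = ((l.getD 0 0 : ℤ) : ℚ) + (T 1)⁻¹ := hT0 ▸ h1
        have hT1 : 1 ≤ T 1 := hTpos 1 le_rfl (by omega)
        have hT1ne : T 1 ≠ 0 := by linarith
        have key : x * T 1 = T 1 * ((l.getD 0 0 : ℤ) : ℚ) + 1 := by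
          rw [hx1]; field_simp
        show x * (T 1 * ((cden l 1 : ℤ):ℚ) + ((cden l 0 : ℤ):ℚ))
            = T 1 * ((cnum l 1 : ℤ):ℚ) + ((cnum l 0:ℤ):ℚ)
        show x * (T 1 * ((1 : ℤ):ℚ) + ((0 : ℤ):ℚ)) = T 1 * ((l.getD 0 0 : ℤ):ℚ) + ((1:ℤ):ℚ)
        push_cast
        linear_combination key
      | succ m ih =>
        intro h
        have ihm := ih (by omega)
        have hstep := hTstep (m+1) (by omega)
        have hT2 : 1 ≤ T (m+2) := hTpos (m+2) (by omega) (by omega)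
        have hT2ne : T (m+2) ≠ 0 := by linarith
        have hT' : T (m+1) * T (m+2) = ((l.getD (m+1) 0 : ℤ) : ℚ) * T (m+2) + 1 := by
          rw [hstep]; field_simp
        have hK2 : ((cden l (m+2) : ℤ) : ℚ)
            = ((l.getD (m+1) 0 : ℤ) : ℚ) * ((cden l (m+1):ℤ):ℚ) + ((cden l m:ℤ):ℚ) := by
          rw [cden_two]; push_cast; ring
        have hH2 : ((cnum l (m+2) : ℤ) : ℚ)
            = ((l.getD (m+1) 0 : ℤ) : ℚ) * ((cnum l (m+1):ℤ):ℚ) + ((cnum l m:ℤ):ℚ) := by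
          rw [cnum_two]; push_cast; ring
        rw [hK2, hH2]
        linear_combination T (m+2) * ihm
          - (x * ((cden l (m+1):ℤ):ℚ) - ((cnum l (m+1):ℤ):ℚ)) * hT'
    have hTtop : T (K+1) = ((l.getD (K+1) 0 : ℤ) : ℚ) := by
      rw [hT_def]
      show cfVal (l.getD (K+1) 0) (l.drop (K+2)) = _
      have hnil : l.drop (K+2) = [] := List.drop_eq_nil_of_le (by omega)
      rw [hnil]
      rfl
    have haX : x * ((cden l (K+2) : ℤ):ℚ) = ((cnum l (K+2):ℤ):ℚ) := by
      have h := hC K (by omega)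
      rw [hTtop] at h
      rw [cden_two, cnum_two]
      push_cast at h ⊢
      linear_combination h
    -- Step 1 : d < cden l (K+2)
    have hdQlt : d < cden l (K+2) := by
      by_contra hcon
      push_neg at hcon
      have hQ1 : (1:ℤ) ≤ cden l (K+2) := (hKD (K+2) (by omega)).2 (by omega)
      have hQq : (0:ℚ) < ((cden l (K+2):ℤ):ℚ) := by exact_mod_cast hQ1.trans_lt' (by norm_num)
      have hM : cnum l (K+2)*d - c*cden l (K+2) ≠ 0 := by
        intro h
        apply h0
        have hz : ((cnum l (K+2):ℤ):ℚ)*d - (c:ℚ)*((cden l (K+2):ℤ):ℚ) = 0 := by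
          exact_mod_cast congrArg (Int.cast : ℤ → ℚ) h
        rw [div_eq_iff (ne_of_gt hdQ)]
        have : x * ((cden l (K+2) : ℤ):ℚ) * d = ((cnum l (K+2):ℤ):ℚ) * d := by rw [haX]
        nlinarith [this, hz, hQq]
      have h1 : x - (c:ℚ)/d
          = ((cnum l (K+2)*d - c*cden l (K+2) : ℤ):ℚ)/(((cden l (K+2):ℤ):ℚ)*d) := by
        rw [eq_div_iff (by positivity)]
        push_cast
        field_simp
        nlinarith [haX]
      have habs : (1:ℚ) ≤ |((cnum l (K+2)*d - c*cden l (K+2):ℤ):ℚ)| := by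
        have := Int.one_le_abs hM
        exact_mod_cast this
      rw [h1, abs_div] at happ
      have habsden : |((cden l (K+2):ℤ):ℚ)*(d:ℚ)| = ((cden l (K+2):ℤ):ℚ)*(d:ℚ) :=
        abs_of_pos (mul_pos hQq hdQ)
      rw [habsden, div_lt_div_iff₀ (mul_pos hQq hdQ) (by positivity)] at happ
      have hQd : ((cden l (K+2):ℤ):ℚ) ≤ (d:ℚ) := by exact_mod_cast hcon
      nlinarith [happ, mul_le_mul_of_nonneg_right hQd (le_of_lt hdQ),
        mul_le_mul_of_nonneg_right habs (le_of_lt (mul_pos hdQ hdQ))]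
    -- Step 2 : choose n = m+1 with cden l (m+1) ≤ d < cden l (m+2)
    have hd1K : cden l 1 ≤ d := by show (1:ℤ) ≤ d; omega
    obtain ⟨n, hn_def⟩ : ∃ n, n = Nat.findGreatest (fun m => cden l m ≤ d) (K+1) := ⟨_, rfl⟩
    have hn1 : 1 ≤ n := by
      rw [hn_def]
      exact Nat.le_findGreatest (P := fun m => cden l m ≤ d) (m := 1) (n := K+1) (by omega) hd1K
    have hnk : n ≤ K+1 := by
      rw [hn_def]; exact Nat.findGreatest_le _
    have hBd : cden l n ≤ d := by
      rw [hn_def]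
      exact Nat.findGreatest_spec (P := fun m => cden l m ≤ d) (m := 1) (n := K+1) (by omega) hd1K
    have hdA : d < cden l (n+1) := by
      rcases Nat.lt_or_ge n (K+1) with hlt | hge
      · have hng := Nat.findGreatest_is_greatest
          (P := fun m => cden l m ≤ d) (n := K+1) (k := n+1) (by omega) (by omega)
        have hng2 : ¬ (cden l (n+1) ≤ d) := hng
        omega
      · have hnn : n = K+1 := by omega
        rw [hnn]
        exact hdQlt
    obtain ⟨m, hm⟩ : ∃ m, n = m+1 := ⟨n-1, by omega⟩
    rw [hm] at hBd hdA hnk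
    have hB1pos : (1:ℤ) ≤ cden l (m+1) := (hKD (m+1) (by omega)).2 (by omega)
    have hB0nn : (0:ℤ) ≤ cden l m := (hKD m (by omega)).1
    have hB0B1 : cden l m ≤ cden l (m+1) := hKmono m (by omega)
    have hA2pos : (1:ℤ) ≤ cden l (m+2) := (hKD (m+2) (by omega)).2 (by omega)
    -- decomposition c,d in terms of convergents
    obtain ⟨s, hs⟩ : ∃ s:ℤ, s = (-1)^(m+2) := ⟨_, rfl⟩
    have hdet : cnum l (m+2) * cden l (m+1) - cnum l (m+1) * cden l (m+2) = s := by
      rw [hs]; exact cf_det l (m+1)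
    have hss : s*s = 1 := by rw [hs, ← mul_pow]; norm_num
    obtain ⟨u, hu⟩ : ∃ u:ℤ, u = s*(c*cden l (m+1) - d*cnum l (m+1)) := ⟨_, rfl⟩
    obtain ⟨v, hv⟩ : ∃ v:ℤ, v = s*(d*cnum l (m+2) - c*cden l (m+2)) := ⟨_, rfl⟩
    have hcu : u * cnum l (m+2) + v * cnum l (m+1) = c := by
      rw [hu, hv]; linear_combination (s*c)*hdet + c*hss
    have hdu : u * cden l (m+2) + v * cden l (m+1) = d := by
      rw [hu, hv]; linear_combination (s*d)*hdet + d*hss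
    clear hu hv hs hss hdet
    -- epsilon facts
    have hE : ∀ μ, μ + 1 < l.length →
        (0 < T (μ+1) * ((cden l (μ+1):ℤ):ℚ) + ((cden l μ:ℤ):ℚ)) ∧
        ((((cden l μ:ℤ):ℚ) * x - ((cnum l μ:ℤ):ℚ)) *
            (T (μ+1) * ((cden l (μ+1):ℤ):ℚ) + ((cden l μ:ℤ):ℚ)) = (-1:ℚ)^(μ+1) * T (μ+1)) ∧
        ((((cden l (μ+1):ℤ):ℚ) * x - ((cnum l (μ+1):ℤ):ℚ)) *
            (T (μ+1) * ((cden l (μ+1):ℤ):ℚ) + ((cden l μ:ℤ):ℚ)) = (-1:ℚ)^μ) := by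
      intro μ hμ
      have hT1 : 1 ≤ T (μ+1) := hTpos _ (by omega) (by omega)
      have hK1 : (1:ℚ) ≤ ((cden l (μ+1):ℤ):ℚ) := by
        exact_mod_cast (hKD (μ+1) (by omega)).2 (by omega)
      have hK0 : (0:ℚ) ≤ ((cden l μ:ℤ):ℚ) := by exact_mod_cast (hKD μ (by omega)).1
      have hden : 0 < T (μ+1) * ((cden l (μ+1):ℤ):ℚ) + ((cden l μ:ℤ):ℚ) := by nlinarith
      have hcc := hC μ hμ
      have hdetQ : ((cnum l (μ+1):ℤ):ℚ)*((cden l μ:ℤ):ℚ)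
          - ((cnum l μ:ℤ):ℚ)*((cden l (μ+1):ℤ):ℚ) = (-1:ℚ)^(μ+1) := by
        exact_mod_cast cf_det l μ
      refine ⟨hden, ?_, ?_⟩
      · linear_combination ((cden l μ:ℤ):ℚ) * hcc + T (μ+1) * hdetQ
      · linear_combination ((cden l (μ+1):ℤ):ℚ) * hcc - hdetQ
    have hA2Q : (0:ℚ) < ((cden l (m+2):ℤ):ℚ) := by
      exact_mod_cast (by omega : (0:ℤ) < cden l (m+2))
    obtain ⟨α, β, hα, hβ, he1, he2, hIde⟩ :
        ∃ α β : ℚ, 0 < α ∧ 0 ≤ β ∧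
          (((cden l (m+1):ℤ):ℚ) * x - ((cnum l (m+1):ℤ):ℚ) = (-1:ℚ)^m * α) ∧
          (((cden l (m+2):ℤ):ℚ) * x - ((cnum l (m+2):ℤ):ℚ) = (-1:ℚ)^(m+1) * β) ∧
          (((cden l (m+2):ℤ):ℚ) * α + ((cden l (m+1):ℤ):ℚ) * β = 1) := by
      rcases Nat.lt_or_ge (m+1) (K+1) with hcase | hcase
      · obtain ⟨hden, h21, h22⟩ := hE (m+1) (by omega)
        have hT2 : 1 ≤ T (m+2) := hTpos _ (by omega) (by omega)
        refine ⟨T (m+2) / (T (m+2) * ((cden l (m+2):ℤ):ℚ) + ((cden l (m+1):ℤ):ℚ)),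
          1 / (T (m+2) * ((cden l (m+2):ℤ):ℚ) + ((cden l (m+1):ℤ):ℚ)),
          div_pos (by linarith) hden, by positivity, ?_, ?_, ?_⟩
        · rw [← mul_div_assoc, eq_div_iff hden.ne']
          linear_combination h21
        · rw [← mul_div_assoc, eq_div_iff hden.ne']
          linear_combination h22
        · field_simp
      · have hmK : m = K := by omega
        obtain ⟨hden, h21, h22⟩ := hE m (by omega)
        have hTt : T (m+1) = ((l.getD (m+1) 0 : ℤ):ℚ) := by rw [hmK]; exact hTtop
        have hden_eq : T (m+1) * ((cden l (m+1):ℤ):ℚ) + ((cden l m:ℤ):ℚ)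
            = ((cden l (m+2):ℤ):ℚ) := by
          rw [hTt, cden_two]; push_cast; ring
        refine ⟨1 / ((cden l (m+2):ℤ):ℚ), 0, by positivity, le_rfl, ?_, ?_, ?_⟩
        · rw [← mul_div_assoc, eq_div_iff hA2Q.ne']
          rw [hden_eq] at h22
          linear_combination h22
        · have hcc := hC m (by omega)
          rw [hTt] at hcc
          have hK2Q : ((cden l (m+2):ℤ):ℚ)
              = ((l.getD (m+1) 0:ℤ):ℚ)*((cden l (m+1):ℤ):ℚ) + ((cden l m:ℤ):ℚ) := by
            rw [cden_two]; push_cast; ring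
          have hH2Q : ((cnum l (m+2):ℤ):ℚ)
              = ((l.getD (m+1) 0:ℤ):ℚ)*((cnum l (m+1):ℤ):ℚ) + ((cnum l m:ℤ):ℚ) := by
            rw [cnum_two]; push_cast; ring
          linear_combination hcc + x*hK2Q - hH2Q
        · rw [mul_zero, add_zero, mul_one_div, div_self hA2Q.ne']
    -- basic cast facts
    have hB1Q : (1:ℚ) ≤ ((cden l (m+1):ℤ):ℚ) := by exact_mod_cast hB1pos
    have hBdQ : ((cden l (m+1):ℤ):ℚ) ≤ (d:ℚ) := by exact_mod_cast hBd
    have hcuQ : (u:ℚ) * ((cnum l (m+2):ℤ):ℚ) + (v:ℚ) * ((cnum l (m+1):ℤ):ℚ) = (c:ℚ) := by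
      exact_mod_cast hcu
    have hduQ : (u:ℚ) * ((cden l (m+2):ℤ):ℚ) + (v:ℚ) * ((cden l (m+1):ℤ):ℚ) = (d:ℚ) := by
      exact_mod_cast hdu
    have hSe : (d:ℚ)*x - (c:ℚ) = (v:ℚ)*((-1:ℚ)^m*α) + (u:ℚ)*((-1:ℚ)^(m+1)*β) := by
      rw [← he1, ← he2]; linear_combination (-x)*hduQ + hcuQ
    have hlt : ((c:ℚ)/d < x ↔ 0 < (d:ℚ)*x - (c:ℚ)) := by
      rw [div_lt_iff₀ hdQ]; constructor <;> intro <;> linarith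
    have happ' : |(d:ℚ)*x - (c:ℚ)| * d < 1 := by
      have h2 : (d:ℚ)*x - c = (x - (c:ℚ)/d)*d := by field_simp
      have h3 : |x - (c:ℚ)/d| * (d:ℚ)^2 < 1 := by
        have hp : (0:ℚ) < (d:ℚ)^2 := by positivity
        calc |x - (c:ℚ)/d| * (d:ℚ)^2 < (1/(d:ℚ)^2) * (d:ℚ)^2 := by
              exact mul_lt_mul_of_pos_right happ hp
        _ = 1 := by field_simp
      rw [h2, abs_mul, abs_of_pos hdQ]
      nlinarith [h3, abs_nonneg (x - (c:ℚ)/d), hdQ]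
    rcases lt_trichotomy u 0 with hu0 | hu0 | hu0
    · -- u < 0
      rcases lt_trichotomy v 0 with hv0 | hv0 | hv0
      · exfalso
        nlinarith [hdu, mul_nonneg (by omega : (0:ℤ) ≤ -u) (by omega : (0:ℤ) ≤ cden l (m+2)),
          mul_nonneg (by omega : (0:ℤ) ≤ -v) (by omega : (0:ℤ) ≤ cden l (m+1)), hd]
      · exfalso
        have hz : v * cden l (m+1) = 0 := by rw [hv0]; ring
        nlinarith [hdu, hz, mul_nonneg (by omega : (0:ℤ) ≤ -u) (by omega : (0:ℤ) ≤ cden l (m+2)), hd]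
      · -- u < 0 < v : impossible
        exfalso
        have hu1Q : (1:ℚ) ≤ (-(u:ℚ)) := by
          have : (1:ℤ) ≤ -u := by omega
          exact_mod_cast this
        have hv1Q : (1:ℚ) ≤ (v:ℚ) := by exact_mod_cast hv0
        have hSval : (d:ℚ)*x - c = (-1:ℚ)^m * ((v:ℚ)*α + (-(u:ℚ))*β) := by
          rw [hSe]; ring
        have hnn : 0 ≤ (v:ℚ)*α + (-(u:ℚ))*β := by
          have h4 : (0:ℚ) ≤ (v:ℚ)*α := mul_nonneg (by linarith) hα.le
          have h5 : (0:ℚ) ≤ (-(u:ℚ))*β := mul_nonneg (by linarith) hβ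
          linarith
        have habs4 : |(d:ℚ)*x - c| = (v:ℚ)*α + (-(u:ℚ))*β := by
          rw [hSval, abs_mul, abs_pow, abs_neg, abs_one, one_pow, one_mul, abs_of_nonneg hnn]
        rw [habs4] at happ'
        have key : ((v:ℚ)*d - ((cden l (m+2):ℤ):ℚ))*α + ((-(u:ℚ))*d - ((cden l (m+1):ℤ):ℚ))*β < 0 := by
          nlinarith [happ', hIde]
        have second : 0 ≤ ((-(u:ℚ))*d - ((cden l (m+1):ℤ):ℚ))*β := by
          apply mul_nonneg _ hβ
          nlinarith [mul_nonneg (by linarith : (0:ℚ) ≤ -(u:ℚ) - 1) hdQ.le]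
        have first : (v:ℚ)*d < ((cden l (m+2):ℤ):ℚ) := by
          by_contra hcon2
          push_neg at hcon2
          have h6 : 0 ≤ ((v:ℚ)*d - ((cden l (m+2):ℤ):ℚ))*α := mul_nonneg (by linarith) hα.le
          linarith
        have hvdZ : v*d < cden l (m+2) := by exact_mod_cast first
        have h3 : d + cden l (m+2) ≤ v * cden l (m+1) := by
          nlinarith [hdu, mul_nonneg (by omega : (0:ℤ) ≤ -u-1) (by omega : (0:ℤ) ≤ cden l (m+2))]
        have h4 := mul_le_mul_of_nonneg_right h3 (by omega : (0:ℤ) ≤ d)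
        have h5 := mul_lt_mul_of_pos_right hvdZ (by omega : (0:ℤ) < cden l (m+1))
        have h6 : cden l (m+2) * cden l (m+1) ≤ cden l (m+2) * d :=
          mul_le_mul_of_nonneg_left hBd (by omega)
        nlinarith [h4, h5, h6, mul_pos hd hd]
    · -- u = 0 : convergent at index m+1
      have hz1 : u * cden l (m+2) = 0 := by rw [hu0]; ring
      have hz2 : u * cnum l (m+2) = 0 := by rw [hu0]; ring
      have hvK : v * cden l (m+1) = d := by linarith [hdu, hz1]
      have hvH : v * cnum l (m+1) = c := by linarith [hcu, hz2]
      have hv1 : v = 1 := by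
        have hvd : v ∣ d := ⟨cden l (m+1), hvK.symm⟩
        have hvc : v ∣ c := ⟨cnum l (m+1), hvH.symm⟩
        have hdvd : v ∣ (Int.gcd c d : ℤ) := Int.dvd_coe_gcd hvc hvd
        rw [hcd] at hdvd
        rcases Int.isUnit_iff.1 (isUnit_of_dvd_one (by exact_mod_cast hdvd)) with h | h
        · exact h
        · exfalso
          rw [h] at hvK
          have : -cden l (m+1) = d := by linarith [hvK]
          omega
      have hc' : c = cnum l (m+1) := by rw [← hvH, hv1]; ring
      have hd' : d = cden l (m+1) := by rw [← hvK, hv1]; ring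
      left
      refine ⟨m+1, by simp [hK_def]; omega, ?_, ?_⟩
      · rw [hc', hd']
      · rw [hlt]
        have hS0 : (d:ℚ)*x - c = (-1:ℚ)^m * α := by
          rw [hSe, hu0, hv1]; push_cast; ring
        rw [hS0]
        rcases Nat.even_or_odd m with hpar | hpar
        · have h1 : (0:ℚ) < (-1:ℚ)^m*α := by rw [hpar.neg_one_pow]; linarith
          exact iff_of_true h1 (Even.add_one hpar)
        · have h1 : ¬ (0:ℚ) < (-1:ℚ)^m*α := by rw [hpar.neg_one_pow]; intro hcon2; linarith
          have h2 : ¬ Odd (m+1) := by rw [Nat.odd_add_one]; intro h; exact h hpar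
          exact iff_of_false h1 h2
    · -- u > 0
      rcases lt_trichotomy v 0 with hv0 | hv0 | hv0
      · -- u > 0 > v : the main case
        have hw1Q : (1:ℚ) ≤ (-(v:ℚ)) := by
          have : (1:ℤ) ≤ -v := by omega
          exact_mod_cast this
        have hu1Q : (1:ℚ) ≤ (u:ℚ) := by exact_mod_cast hu0
        have hSval : (d:ℚ)*x - c = (-1:ℚ)^(m+1) * ((-(v:ℚ))*α + (u:ℚ)*β) := by
          rw [hSe]; ring
        have hpos2 : 0 < (-(v:ℚ))*α + (u:ℚ)*β := by
          have h4 : α ≤ (-(v:ℚ))*α := by nlinarith [mul_nonneg (by linarith : (0:ℚ) ≤ -(v:ℚ) - 1) hα.le]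
          have h5 : (0:ℚ) ≤ (u:ℚ)*β := mul_nonneg (by linarith) hβ
          linarith
        have habs4 : |(d:ℚ)*x - c| = (-(v:ℚ))*α + (u:ℚ)*β := by
          rw [hSval, abs_mul, abs_pow, abs_neg, abs_one, one_pow, one_mul, abs_of_nonneg hpos2.le]
        rw [habs4] at happ'
        have key : ((-(v:ℚ))*d - ((cden l (m+2):ℤ):ℚ))*α + ((u:ℚ)*d - ((cden l (m+1):ℤ):ℚ))*β < 0 := by
          nlinarith [happ', hIde]
        have second : 0 ≤ ((u:ℚ)*d - ((cden l (m+1):ℤ):ℚ))*β := by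
          apply mul_nonneg _ hβ
          nlinarith [mul_nonneg (by linarith : (0:ℚ) ≤ (u:ℚ) - 1) hdQ.le]
        have first : (-(v:ℚ))*d < ((cden l (m+2):ℤ):ℚ) := by
          by_contra hcon2
          push_neg at hcon2
          have h6 : 0 ≤ ((-(v:ℚ))*d - ((cden l (m+2):ℤ):ℚ))*α := mul_nonneg (by linarith) hα.le
          linarith
        have hwd : (-v)*d < cden l (m+2) := by exact_mod_cast first
        have hu1 : u = 1 := by
          by_contra hne
          have hu2 : 2 ≤ u := by omega
          have h5 := mul_lt_mul_of_pos_right hwd (show (0:ℤ) < cden l (m+1) by omega)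
          have h6 : cden l (m+2) * cden l (m+1) ≤ cden l (m+2) * d :=
            mul_le_mul_of_nonneg_left hBd (by omega)
          have h7 : (-v) * cden l (m+1) * d < cden l (m+2) * d := by nlinarith [h5, h6]
          have h8 : (-v) * cden l (m+1) < cden l (m+2) := lt_of_mul_lt_mul_right h7 (by omega)
          nlinarith [hdu, h8, mul_nonneg (by omega : (0:ℤ) ≤ u - 2) (by omega : (0:ℤ) ≤ cden l (m+2)), hdA]
        have hb1 : (1:ℤ) ≤ l.getD (m+1) 0 := hl (m+1) (by omega) (by omega)
        have hK2' : cden l (m+2) = l.getD (m+1) 0 * cden l (m+1) + cden l m := cden_two l m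
        have hH2' : cnum l (m+2) = l.getD (m+1) 0 * cnum l (m+1) + cnum l m := cnum_two l m
        rw [hu1] at hdu hcu
        have hd2 : d = (l.getD (m+1) 0 + v) * cden l (m+1) + cden l m := by
          linear_combination -hdu + hK2'
        have hc2 : c = (l.getD (m+1) 0 + v) * cnum l (m+1) + cnum l m := by
          linear_combination -hcu + hH2'
        have hparity : ((c:ℚ)/d < x ↔ Odd m) := by
          rw [hlt, hSval]
          rcases Nat.even_or_odd m with hpar | hpar
          · refine iff_of_false ?_ (by rw [Nat.not_odd_iff_even]; exact hpar)
            rw [(hpar.add_one).neg_one_pow]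
            intro hcon2; linarith
          · refine iff_of_true ?_ hpar
            rw [(hpar.add_one).neg_one_pow]
            linarith
        rcases le_or_gt (l.getD (m+1) 0 + v) 0 with hg | hg
        · -- degenerate: convergent at index m
          have h5 : d ≤ cden l m := by
            nlinarith [hd2, mul_nonneg (by omega : (0:ℤ) ≤ -(l.getD (m+1) 0 + v))
              (by omega : (0:ℤ) ≤ cden l (m+1))]
          have h6 : cden l m = d := by omega
          have h7 : (l.getD (m+1) 0 + v) * cden l (m+1) = 0 := by linarith [hd2]
          have h8 : l.getD (m+1) 0 + v = 0 := by
            rcases mul_eq_zero.1 h7 with h | h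
            · exact h
            · omega
          have hc3 : c = cnum l m := by
            have hz : (l.getD (m+1) 0 + v) * cnum l (m+1) = 0 := by rw [h8]; ring
            linarith [hc2, hz]
          left
          refine ⟨m, by simp [hK_def]; omega, ?_, hparity⟩
          rw [hc3, ← h6]
        · -- genuine semiconvergent
          right
          refine ⟨m, by simp [hK_def]; omega, l.getD (m+1) 0 + v, ?_, ?_, hparity⟩
          · by_cases hvm : v = -1
            · right
              show l.getD (m+1) 0 + v = l.getD (m+1) 0 - 1
              rw [hvm]; ring
            · left
              have hv2 : v ≤ -2 := by omega
              by_contra hne2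
              have hg2 : 2 ≤ l.getD (m+1) 0 + v := by omega
              have hcontra1 : (0:ℤ) ≤ (-v) * (l.getD (m+1) 0 + v) - l.getD (m+1) 0 := by
                nlinarith [mul_nonneg (by omega : (0:ℤ) ≤ -v - 1)
                  (by omega : (0:ℤ) ≤ l.getD (m+1) 0 + v - 2)]
              have hexp : (-v)*d = (-v)*(l.getD (m+1) 0 + v)*cden l (m+1) + (-v)*cden l m := by
                rw [hd2]; ring
              nlinarith [hwd, hexp, hK2',
                mul_nonneg hcontra1 (by omega : (0:ℤ) ≤ cden l (m+1)),
                mul_nonneg (by omega : (0:ℤ) ≤ -v-1) hB0nn]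
          · have e1 : cnum l m + (l.getD (m+1) 0 + v) * cnum l (m+1) = c := by linarith [hc2]
            have e2 : cden l m + (l.getD (m+1) 0 + v) * cden l (m+1) = d := by linarith [hd2]
            rw [← e1, ← e2]
      · -- v = 0 : impossible
        exfalso
        have hz : v * cden l (m+1) = 0 := by rw [hv0]; ring
        nlinarith [hdu, hz, mul_nonneg (by omega : (0:ℤ) ≤ u - 1) (by omega : (0:ℤ) ≤ cden l (m+2)), hdA]
      · -- u > 0, v > 0 : impossible
        exfalso
        nlinarith [hdu, mul_nonneg (by omega : (0:ℤ) ≤ u - 1) (by omega : (0:ℤ) ≤ cden l (m+2)),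
          mul_nonneg (by omega : (0:ℤ) ≤ v - 1) (by omega : (0:ℤ) ≤ cden l (m+1)), hdA, hB1pos]
end

section
/- Let x be a rational with convergents h_j/k_j, and fix even j with partial quotient b_{j+2} ≥ 4 of x. If an integer g with 1 ≤ g < b_{j+2} satisfies x − (h_j + g·h_{j+1})/(k_j + g·k_{j+1}) < 1/(k_j + g·k_{j+1})², then g = 1 or g = b_{j+2} − 1. -/
lemma cfVal_ge (bs : List ℤ) : ∀ b0 : ℤ, (∀ b ∈ bs, 1 ≤ b) → (b0:ℚ) ≤ cfVal b0 bs := by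
  induction bs with
  | nil => intro b0 _; simp [cfVal]
  | cons b bs ih =>
      intro b0 h
      have hb : (1:ℤ) ≤ b := h b (List.mem_cons_self)
      have h1 : (1:ℚ) ≤ cfVal b bs := by
        have := ih b (fun x hx => h x (List.mem_cons_of_mem _ hx))
        have : ((1:ℤ):ℚ) ≤ cfVal b bs := le_trans (by exact_mod_cast hb) this
        simpa using this
      simp only [cfVal]
      have : 0 ≤ (cfVal b bs)⁻¹ := inv_nonneg.2 (by linarith)
      linarith

lemma cden_facts (b0 : ℤ) (bs : List ℤ) (hpos : ∀ b ∈ bs, 1 ≤ b) :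
    ∀ n, n ≤ bs.length → 0 ≤ cden (b0::bs) n ∧ 1 ≤ cden (b0::bs) (n+1) := by
  intro n
  induction n with
  | zero => intro _; simp [cden]
  | succ n ih =>
      intro hn
      obtain ⟨h0, h1⟩ := ih (by omega)
      refine ⟨by linarith, ?_⟩
      have hg : 1 ≤ (b0::bs).getD (n+1) 0 := by
        rw [List.getD_cons_succ]
        have hlt : n < bs.length := by omega
        rw [List.getD_eq_getElem _ _ hlt]
        exact hpos _ (List.getElem_mem hlt)
      show 1 ≤ cden (b0::bs) (n+2)
      rw [cden]
      nlinarith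

lemma cdet (l : List ℤ) : ∀ n, cnum l (n+2) * cden l (n+1) - cnum l (n+1) * cden l (n+2) = (-1)^n := by
  intro n
  induction n with
  | zero =>
      show (l.getD 1 0 * cnum l 1 + cnum l 0) * cden l 1 -
        cnum l 1 * (l.getD 1 0 * cden l 1 + cden l 0) = 1
      simp [cnum, cden]
      ring
  | succ n ih =>
      have e1 : cnum l (n+1+2) = l.getD (n+2) 0 * cnum l (n+2) + cnum l (n+1) := rfl
      have e2 : cden l (n+1+2) = l.getD (n+2) 0 * cden l (n+2) + cden l (n+1) := rfl
      rw [e1, e2, pow_succ]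
      linear_combination -ih

lemma cf_rep (b0 : ℤ) (bs : List ℤ) (hpos : ∀ b ∈ bs, 1 ≤ b) :
    ∀ n, n < bs.length →
      cfVal b0 bs = (cfVal (bs.getD n 0) (bs.drop (n+1)) * (cnum (b0::bs) (n+1) : ℚ)
          + (cnum (b0::bs) n : ℚ)) /
        (cfVal (bs.getD n 0) (bs.drop (n+1)) * (cden (b0::bs) (n+1) : ℚ)
          + (cden (b0::bs) n : ℚ)) := by
  intro n
  induction n with
  | zero =>
      intro hn
      match bs, hn with
      | c :: bs', _ =>
        have hc : (1:ℤ) ≤ c := hpos c (List.mem_cons_self)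
        have h1 : (1:ℚ) ≤ cfVal c bs' := by
          have := cfVal_ge bs' c (fun x hx => hpos x (List.mem_cons_of_mem _ hx))
          calc (1:ℚ) ≤ (c:ℚ) := by exact_mod_cast hc
            _ ≤ _ := this
        have hne : cfVal c bs' ≠ 0 := by linarith
        show (b0:ℚ) + (cfVal c bs')⁻¹ = _
        simp only [List.getD_cons_zero, List.drop_succ_cons, List.drop_zero]
        have e1 : cnum (b0 :: c :: bs') 1 = b0 := by simp [cnum]
        have e2 : cnum (b0 :: c :: bs') 0 = 1 := rfl
        have e3 : cden (b0 :: c :: bs') 1 = 1 := rfl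
        have e4 : cden (b0 :: c :: bs') 0 = 0 := rfl
        rw [e1, e2, e3, e4]
        push_cast
        field_simp
        ring
  | succ n ih =>
      intro hn
      have hn' : n < bs.length := by omega
      have hrep := ih hn'
      set l := b0 :: bs with hl
      -- tail values
      have hdrop : bs.drop (n+1) = bs.getD (n+1) 0 :: bs.drop (n+2) := by
        rw [List.getD_eq_getElem _ _ hn, List.drop_eq_getElem_cons hn]
      have hu : cfVal (bs.getD n 0) (bs.drop (n+1))
          = (bs.getD n 0 : ℚ) + (cfVal (bs.getD (n+1) 0) (bs.drop (n+2)))⁻¹ := by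
        rw [hdrop]; rfl
      set v := cfVal (bs.getD (n+1) 0) (bs.drop (n+2)) with hv
      have hv1 : (1:ℚ) ≤ v := by
        have hm : (1:ℤ) ≤ bs.getD (n+1) 0 := by
          rw [List.getD_eq_getElem _ _ hn]; exact hpos _ (List.getElem_mem hn)
        have := cfVal_ge (bs.drop (n+2)) (bs.getD (n+1) 0)
          (fun x hx => hpos x (List.mem_of_mem_drop hx))
        calc (1:ℚ) ≤ (bs.getD (n+1) 0 : ℚ) := by exact_mod_cast hm
          _ ≤ _ := this
      have hvne : v ≠ 0 := by linarith
      -- cden positivity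
      obtain ⟨hk0, hk1⟩ := cden_facts b0 bs hpos n (by omega)
      obtain ⟨hk0', hk1'⟩ := cden_facts b0 bs hpos (n+1) (by omega)
      have hu1 : (1:ℚ) ≤ cfVal (bs.getD n 0) (bs.drop (n+1)) := by
        have hm : (1:ℤ) ≤ bs.getD n 0 := by
          rw [List.getD_eq_getElem _ _ hn']; exact hpos _ (List.getElem_mem hn')
        have := cfVal_ge (bs.drop (n+1)) (bs.getD n 0)
          (fun x hx => hpos x (List.mem_of_mem_drop hx))
        calc (1:ℚ) ≤ (bs.getD n 0 : ℚ) := by exact_mod_cast hm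
          _ ≤ _ := this
      have hD1 : (0:ℚ) < cfVal (bs.getD n 0) (bs.drop (n+1)) * (cden l (n+1) : ℚ) + (cden l n : ℚ) := by
        have : (1:ℚ) ≤ (cden l (n+1) : ℚ) := by exact_mod_cast hk1
        have h0 : (0:ℚ) ≤ (cden l n : ℚ) := by exact_mod_cast hk0
        nlinarith
      have hD2 : (0:ℚ) < v * (cden l (n+2) : ℚ) + (cden l (n+1) : ℚ) := by
        have : (1:ℚ) ≤ (cden l (n+2) : ℚ) := by exact_mod_cast hk1'
        have h0 : (0:ℚ) ≤ (cden l (n+1) : ℚ) := by exact_mod_cast hk0'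
        nlinarith
      have egd : l.getD (n+1) 0 = bs.getD n 0 := List.getD_cons_succ
      have e1 : cnum l (n+1+1) = bs.getD n 0 * cnum l (n+1) + cnum l n := by
        rw [show cnum l (n+1+1) = l.getD (n+1) 0 * cnum l (n+1) + cnum l n from rfl, egd]
      have e2 : cden l (n+1+1) = bs.getD n 0 * cden l (n+1) + cden l n := by
        rw [show cden l (n+1+1) = l.getD (n+1) 0 * cden l (n+1) + cden l n from rfl, egd]
      rw [e2] at hD2
      rw [hu] at hD1
      rw [hrep, e1, e2, hu]
      rw [div_eq_div_iff (ne_of_gt hD1) (ne_of_gt hD2)]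
      push_cast
      field_simp
      ring

/-- Here `j : ℕ` is even, `b = b_{j+2}` is the `(j+2)`-nd partial quotient, and the convergents
`h_j/k_j` are encoded with the index shift `h_j = cnum l (j+1)`, `k_j = cden l (j+1)`. -/
theorem stmt_8 (b0 : ℤ) (bs : List ℤ) (hpos : ∀ b ∈ bs, 1 ≤ b)
    (x : ℚ) (hx : x = cfVal b0 bs)
    (j : ℕ) (hjeven : Even j) (hj : j + 2 ≤ bs.length)
    (b : ℤ) (hb : b = (b0 :: bs).getD (j + 2) 0) (hb4 : 4 ≤ b)
    (g : ℤ) (hg1 : 1 ≤ g) (hgb : g < b)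
    (hineq : x - ((cnum (b0 :: bs) (j + 1) + g * cnum (b0 :: bs) (j + 2) : ℤ) : ℚ) /
        ((cden (b0 :: bs) (j + 1) + g * cden (b0 :: bs) (j + 2) : ℤ) : ℚ) <
      1 / ((cden (b0 :: bs) (j + 1) + g * cden (b0 :: bs) (j + 2) : ℤ) : ℚ) ^ 2) :
    g = 1 ∨ g = b - 1 := by
  by_contra hcon
  push_neg at hcon
  obtain ⟨hne1, hneb⟩ := hcon
  have hg2 : 2 ≤ g := by omega
  have hgb2 : g ≤ b - 2 := by omega
  set l := b0 :: bs with hl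
  have hj1 : j + 1 < bs.length := by omega
  have hrep := cf_rep b0 bs hpos (j+1) hj1
  set t : ℚ := cfVal (bs.getD (j+1) 0) (bs.drop (j+1+1)) with htdef
  have hbt : (b:ℚ) ≤ t := by
    have hbg : b = bs.getD (j+1) 0 := by
      rw [hb]; exact List.getD_cons_succ
    rw [hbg]
    exact cfVal_ge _ _ (fun y hy => hpos y (List.mem_of_mem_drop hy))
  have hdet : cnum l (j+2) * cden l (j+1) - cnum l (j+1) * cden l (j+2) = 1 := by
    have := cdet l j
    rwa [Even.neg_one_pow hjeven] at this
  obtain ⟨hk0, hk1⟩ := cden_facts b0 bs hpos (j+1) (by omega)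
  have hk0' : (0:ℚ) ≤ ((cden l (j+1) : ℤ) : ℚ) := by exact_mod_cast hk0
  have hk1' : (1:ℚ) ≤ ((cden l (j+2) : ℤ) : ℚ) := by exact_mod_cast hk1
  have hdet' : ((cnum l (j+2) : ℤ) : ℚ) * ((cden l (j+1) : ℤ) : ℚ)
      - ((cnum l (j+1) : ℤ) : ℚ) * ((cden l (j+2) : ℤ) : ℚ) = 1 := by exact_mod_cast hdet
  push_cast at hineq
  set h : ℚ := ((cnum l (j+1) : ℤ) : ℚ) with hh
  set H : ℚ := ((cnum l (j+2) : ℤ) : ℚ) with hH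
  set k : ℚ := ((cden l (j+1) : ℤ) : ℚ) with hk
  set K : ℚ := ((cden l (j+2) : ℤ) : ℚ) with hK
  have hg2' : (2:ℚ) ≤ (g:ℚ) := by exact_mod_cast hg2
  have hbq : (4:ℚ) ≤ (b:ℚ) := by exact_mod_cast hb4
  have hgbq : (g:ℚ) ≤ (b:ℚ) - 2 := by exact_mod_cast hgb2
  have htg : (g:ℚ) + 2 ≤ t := by linarith
  have hq : (0:ℚ) < k + (g:ℚ) * K := by nlinarith
  have hd : (0:ℚ) < t * K + k := by nlinarith
  have hxE : x = (t * H + h) / (t * K + k) := by rw [hx, hrep]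
  rw [hxE] at hineq
  have hq2 : (0:ℚ) < (k + (g:ℚ) * K) ^ 2 := by positivity
  rw [div_sub_div _ _ (ne_of_gt hd) (ne_of_gt hq), div_lt_div_iff₀ (by positivity) hq2] at hineq
  have hE : (t * H + h) * (k + (g:ℚ) * K) - (t * K + k) * (h + (g:ℚ) * H) = t - g := by
    linear_combination (t - (g:ℚ)) * hdet'
  rw [hE] at hineq
  have key : (t - (g:ℚ)) * (k + (g:ℚ) * K) < t * K + k := by
    have h2 : (t - (g:ℚ)) * (k + (g:ℚ) * K) * (k + (g:ℚ) * K) < (t * K + k) * (k + (g:ℚ) * K) := by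
      nlinarith [hineq]
    exact lt_of_mul_lt_mul_right h2 (le_of_lt hq)
  have hid : (t - (g:ℚ)) * (k + (g:ℚ) * K) - (t * K + k)
      = (t - (g:ℚ) - 1) * k + (((g:ℚ) - 1) * (t - ((g:ℚ) + 2)) + ((g:ℚ) - 2)) * K := by
    ring
  have hA : (0:ℚ) ≤ (t - (g:ℚ) - 1) * k :=
    mul_nonneg (by linarith) hk0'
  have hB : (0:ℚ) ≤ (((g:ℚ) - 1) * (t - ((g:ℚ) + 2)) + ((g:ℚ) - 2)) * K :=
    mul_nonneg (by nlinarith) (by linarith)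
  linarith
end

section
/- For any rational a/q with continued fraction expansion of length k, the number of reduced fractions c/d (d > 0) with 0 < a/q − c/d < 1/d² that are not convergents of a/q is at most k. -/

lemma stmt16_getD_cons (b0 : ℤ) (l : List ℤ) (n : ℕ) :
    (b0 :: l).getD (n+1) 0 = l.getD n 0 := rfl

lemma stmt16_getD_nonneg (l : List ℤ) (h : ∀ b ∈ l, 1 ≤ b) (n : ℕ) :
    0 ≤ l.getD n 0 := by
  rcases lt_or_ge n l.length with hn | hn
  · rw [List.getD_eq_getElem _ _ hn]
    exact le_trans zero_le_one (h _ (List.getElem_mem hn))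
  · rw [List.getD_eq_default _ _ hn]

lemma stmt16_getD_pos (l : List ℤ) (h : ∀ b ∈ l, 1 ≤ b) (n : ℕ) (hn : n < l.length) :
    1 ≤ l.getD n 0 := by
  rw [List.getD_eq_getElem _ _ hn]
  exact h _ (List.getElem_mem hn)

/-- denominator shift: `cden (b0::l') (j+1) = cnum l' j`. -/
lemma stmt16_cden_cons (b0 : ℤ) (l' : List ℤ) : ∀ j, cden (b0 :: l') (j+1) = cnum l' j
  | 0 => rfl
  | 1 => by simp [cden, cnum, stmt16_getD_cons]
  | (n+2) => by
      show cden (b0 :: l') (n+3) = cnum l' (n+2)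
      rw [show cden (b0 :: l') (n+3) = (b0::l').getD (n+2) 0 * cden (b0::l') (n+2)
            + cden (b0::l') (n+1) from rfl,
        stmt16_cden_cons b0 l' (n+1), stmt16_cden_cons b0 l' n, stmt16_getD_cons]
      rfl

/-- numerator shift. -/
lemma stmt16_cnum_cons (b0 : ℤ) (l' : List ℤ) :
    ∀ j, cnum (b0 :: l') (j+1) = b0 * cnum l' j + cden l' j
  | 0 => by simp [cnum, cden]
  | 1 => by simp [cnum, cden, stmt16_getD_cons]; ring
  | (n+2) => by
      show cnum (b0 :: l') (n+3) = _
      rw [show cnum (b0 :: l') (n+3) = (b0::l').getD (n+2) 0 * cnum (b0::l') (n+2)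
            + cnum (b0::l') (n+1) from rfl,
        stmt16_cnum_cons b0 l' (n+1), stmt16_cnum_cons b0 l' n, stmt16_getD_cons,
        show cnum l' (n+2) = l'.getD (n+1) 0 * cnum l' (n+1) + cnum l' n from rfl,
        show cden l' (n+2) = l'.getD (n+1) 0 * cden l' (n+1) + cden l' n from rfl]
      ring

lemma stmt16_cnum_pos (l : List ℤ) (h : ∀ b ∈ l, 1 ≤ b) (hne : l ≠ []) :
    ∀ j, 1 ≤ cnum l j
  | 0 => le_refl 1
  | 1 => by
      have : 0 < l.length := List.length_pos_iff.mpr hne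
      exact stmt16_getD_pos l h 0 this
  | (n+2) => by
      have h1 := stmt16_cnum_pos l h hne (n+1)
      have h2 := stmt16_cnum_pos l h hne n
      have h3 := stmt16_getD_nonneg l h (n+1)
      show 1 ≤ l.getD (n+1) 0 * cnum l (n+1) + cnum l n
      nlinarith

/-- value of a continued fraction as quotient of continuants -/
lemma stmt16_cf_val (bs : List ℤ) : ∀ b0 : ℤ, (∀ b ∈ bs, 1 ≤ b) →
    cfVal b0 bs = (cnum (b0 :: bs) (bs.length+1) : ℚ) / (cden (b0 :: bs) (bs.length+1) : ℚ) := by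
  induction bs with
  | nil => intro b0 _; simp [cfVal, cnum, cden, List.getD]
  | cons b1 rest ih =>
    intro b0 hpos
    have hrest : ∀ b ∈ rest, 1 ≤ b := fun b hb => hpos b (List.mem_cons_of_mem _ hb)
    have hb1 : 1 ≤ b1 := hpos b1 (List.mem_cons_self)
    have htail : ∀ b ∈ b1 :: rest, 1 ≤ b := by
      intro b hb; rcases List.mem_cons.mp hb with rfl | hb
      · exact hb1
      · exact hrest b hb
    have hN : 1 ≤ cnum (b1 :: rest) (rest.length + 1) :=
      stmt16_cnum_pos _ htail (by simp) _
    have hNQ : ((cnum (b1 :: rest) (rest.length + 1) : ℚ)) ≠ 0 := by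
      exact_mod_cast (by omega : cnum (b1 :: rest) (rest.length + 1) ≠ 0)
    have hnum : cnum (b0 :: b1 :: rest) (rest.length+2)
        = b0 * cnum (b1 :: rest) (rest.length+1) + cden (b1 :: rest) (rest.length+1) :=
      stmt16_cnum_cons b0 (b1 :: rest) (rest.length+1)
    have hden : cden (b0 :: b1 :: rest) (rest.length+2) = cnum (b1 :: rest) (rest.length+1) :=
      stmt16_cden_cons b0 (b1 :: rest) (rest.length+1)
    show (b0 : ℚ) + (cfVal b1 rest)⁻¹
        = (cnum (b0 :: b1 :: rest) (rest.length+2) : ℚ) / (cden (b0 :: b1 :: rest) (rest.length+2) : ℚ)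
    rw [ih b1 hrest, hnum, hden, inv_div]
    push_cast
    field_simp

lemma stmt16_cruxB (K K' A B C b s t d m : ℤ)
    (hK : 1 ≤ K) (hK' : 0 ≤ K') (hKK' : K' ≤ K)
    (hb : 1 ≤ b) (hB : 1 ≤ B) (hC : 0 ≤ C) (hA : A = b*B + C)
    (hd : d = s*K + t*K') (hdlow : K ≤ d) (hdhigh : d < b*K + K')
    (hm : m = s*B - t*A) (hm1 : 1 ≤ m) (hdm : d*m < K*A + K'*B)
    (hgcd : Int.gcd s t = 1) : s = 1 ∧ t = 0 := by
  have hA1 : 1 ≤ A := by nlinarith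
  have hAB : B ≤ A := by nlinarith
  rcases lt_trichotomy t 0 with ht | ht | ht
  · -- t ≤ -1 : impossible
    exfalso
    have hs1 : 1 ≤ s := by
      by_contra h; push_neg at h
      have h0 : s ≤ 0 := by omega
      have : s * K ≤ 0 := mul_nonpos_of_nonpos_of_nonneg h0 (by linarith)
      have : t * K' ≤ 0 := mul_nonpos_of_nonpos_of_nonneg (by omega) hK'
      linarith
    have hmAB : A + B ≤ m := by
      have h1 : (s - 1) * B ≥ 0 := mul_nonneg (by linarith) (by linarith)
      have h2 : (-t - 1) * A ≥ 0 := mul_nonneg (by omega) (by linarith)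
      nlinarith
    have h3 : (d - K) * m ≥ 0 := mul_nonneg (by linarith) (by linarith)
    have h4 : K * (m - (A + B)) ≥ 0 := mul_nonneg (by linarith) (by linarith)
    have h5 : (K - K') * B ≥ 0 := mul_nonneg (by linarith) (by linarith)
    nlinarith
  · -- t = 0
    subst ht
    have hs1 : 1 ≤ s := by
      by_contra h; push_neg at h
      have h0 : s ≤ 0 := by omega
      have : s * K ≤ 0 := mul_nonpos_of_nonpos_of_nonneg h0 (by linarith)
      simp at hd
      omega
    have : s.natAbs = 1 := by simpa using hgcd
    exact ⟨by omega, rfl⟩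
  · -- t ≥ 1 : impossible
    exfalso
    have hsb : s < b := by
      by_contra h; push_neg at h
      have h1 : (s - b) * K ≥ 0 := mul_nonneg (by linarith) (by linarith)
      have h2 : (t - 1) * K' ≥ 0 := mul_nonneg (by omega) hK'
      nlinarith
    have h1 : (b - 1 - s) * B ≥ 0 := mul_nonneg (by omega) (by linarith)
    have h2 : (t - 1) * A ≥ 0 := mul_nonneg (by omega) (by linarith)
    nlinarith

/-- Case analysis, "lower side" bucket (`e_{i-1} > 0`, i even). -/
lemma stmt16_cruxA (K K' A B C b s t d m : ℤ)
    (hK : 1 ≤ K) (hK' : 0 ≤ K') (hKK' : K' ≤ K)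
    (hb : 1 ≤ b) (hB : 1 ≤ B) (hC : 0 ≤ C) (hA : A = b*B + C)
    (hd : d = s*K + t*K') (hdlow : K ≤ d) (hdhigh : d < b*K + K')
    (hm : m = t*A - s*B) (hm1 : 1 ≤ m) (hdm : d*m < K*A + K'*B) :
    t = 1 ∧ (s = 0 ∨ s = 1 ∨ s = b - 1) := by
  have hA1 : 1 ≤ A := by nlinarith
  have hAB : B ≤ A := by nlinarith
  have hKA : K' * B ≤ K * A := by nlinarith
  rcases lt_trichotomy t 1 with ht | ht | ht
  · -- t ≤ 0 : impossible
    exfalso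
    have h0 : t ≤ 0 := by omega
    have hs : s ≤ -1 := by
      by_contra h; push_neg at h
      have h1 : s * B ≥ 0 := mul_nonneg (by omega) (by linarith)
      have h2 : t * A ≤ 0 := mul_nonpos_of_nonpos_of_nonneg h0 (by linarith)
      linarith
    have h3 : s * K ≤ -K := by nlinarith
    have h4 : t * K' ≤ 0 := mul_nonpos_of_nonpos_of_nonneg h0 hK'
    linarith
  · -- t = 1
    subst ht
    refine ⟨rfl, ?_⟩
    rcases lt_trichotomy s 0 with hs | hs | hs
    · exfalso
      have h3 : s * K ≤ -K := by nlinarith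
      simp only [one_mul] at hd
      linarith
    · exact Or.inl hs
    · -- 1 ≤ s
      have hs1 : 1 ≤ s := hs
      have hsb : s < b := by
        by_contra h; push_neg at h
        have h1 : (s - b) * K ≥ 0 := mul_nonneg (by linarith) (by linarith)
        nlinarith
      by_contra hcon
      push_neg at hcon
      obtain ⟨-, hss1, hssb1⟩ := hcon
      have h2s : 2 ≤ s := by omega
      have hsb2 : s ≤ b - 2 := by omega
      have hAsB : (s+2)*B ≤ A := by nlinarith
      -- dm - (KA + K'B) = (s-1)K(A - (s+2)B) + K(s-1)(s+2)B - s^2 KB + K'(A-(s+2)B) + K'B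
      have h1 : (s-1) * K * (A - (s+2)*B) ≥ 0 :=
        mul_nonneg (mul_nonneg (by omega) (by linarith)) (by linarith)
      have h2 : K' * (A - (s+2)*B) ≥ 0 := mul_nonneg hK' (by linarith)
      have h3 : (s - 2) * K * B ≥ 0 :=
        mul_nonneg (mul_nonneg (by omega) (by linarith)) (by linarith)
      nlinarith
  · -- t ≥ 2 : impossible
    exfalso
    rcases le_or_gt s 0 with hs | hs
    · have h1 : (t - 2) * A ≥ 0 := mul_nonneg (by omega) (by linarith)
      have h2 : s * B ≤ 0 := mul_nonpos_of_nonpos_of_nonneg hs (by linarith)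
      have hm2A : 2*A ≤ m := by linarith
      have h3 : (d - K) * m ≥ 0 := mul_nonneg (by linarith) (by linarith)
      have h4 : K * (m - 2*A) ≥ 0 := mul_nonneg (by linarith) (by linarith)
      linarith
    · have hs1 : 1 ≤ s := hs
      have hsb : s < b := by
        by_contra h; push_neg at h
        have h1 : (s - b) * K ≥ 0 := mul_nonneg (by linarith) (by linarith)
        have h2 : (t - 1) * K' ≥ 0 := mul_nonneg (by omega) hK'
        nlinarith
      have hAsB : (s+1)*B ≤ A := by nlinarith
      have hmAB : A + B ≤ m := by
        have h1 : (t - 2) * A ≥ 0 := mul_nonneg (by omega) (by linarith)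
        linarith
      have h3 : (d - K) * m ≥ 0 := mul_nonneg (by linarith) (by linarith)
      have h4 : K * (m - (A + B)) ≥ 0 := mul_nonneg (by linarith) (by linarith)
      have h5 : (K - K') * B ≥ 0 := mul_nonneg (by linarith) (by linarith)
      nlinarith

lemma stmt16_det (l : List ℤ) :
    ∀ n, cnum l (n+1) * cden l n - cnum l n * cden l (n+1) = (-1 : ℤ)^(n+1)
  | 0 => by simp [cnum, cden]
  | (n+1) => by
      have ih := stmt16_det l n
      rw [show cnum l (n+2) = l.getD (n+1) 0 * cnum l (n+1) + cnum l n from rfl,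
        show cden l (n+2) = l.getD (n+1) 0 * cden l (n+1) + cden l n from rfl, pow_succ]
      linear_combination (-1 : ℤ) * ih

lemma stmt16_cden_nonneg (l : List ℤ) (hg : ∀ n, 0 ≤ l.getD (n+1) 0) :
    ∀ j, 0 ≤ cden l j
  | 0 => le_refl 0
  | 1 => zero_le_one
  | (n+2) => by
      have h1 := stmt16_cden_nonneg l hg (n+1)
      have h2 := stmt16_cden_nonneg l hg n
      have h3 := hg n
      show 0 ≤ l.getD (n+1) 0 * cden l (n+1) + cden l n
      nlinarith

lemma stmt16_cden_pos (l : List ℤ) (hg1 : ∀ n, 1 ≤ n → n < l.length → 1 ≤ l.getD n 0)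
    (hg0 : ∀ n, 0 ≤ l.getD (n+1) 0) :
    ∀ j, 1 ≤ j → j ≤ l.length → 1 ≤ cden l j
  | 0, h, _ => absurd h (by omega)
  | 1, _, _ => le_refl 1
  | (n+2), _, h2 => by
      have ih := stmt16_cden_pos l hg1 hg0 (n+1) (by omega) (by omega)
      have h1 := stmt16_cden_nonneg l hg0 n
      have h3 := hg1 (n+1) (by omega) (by omega)
      show 1 ≤ l.getD (n+1) 0 * cden l (n+1) + cden l n
      nlinarith

lemma stmt16_cden_mono (l : List ℤ) (hg1 : ∀ n, 1 ≤ n → n < l.length → 1 ≤ l.getD n 0)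
    (hg0 : ∀ n, 0 ≤ l.getD (n+1) 0) :
    ∀ n, n + 1 ≤ l.length → cden l n ≤ cden l (n+1)
  | 0, _ => by simp [cden]
  | (n+1), h => by
      have hK1 := stmt16_cden_pos l hg1 hg0 (n+1) (by omega) (by omega)
      have hK0 := stmt16_cden_nonneg l hg0 n
      have hg := hg1 (n+1) (by omega) (by omega)
      show cden l (n+1) ≤ l.getD (n+1) 0 * cden l (n+1) + cden l n
      nlinarith

/-- The number of reduced fractions `c/d` (`d > 0`) with `0 < x - c/d < 1/d²` that are not
convergents `h_j/k_j` (`-1 ≤ j ≤ k - 1`, encoded as indices `i = j + 1 ≤ k`) is at most `k`,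
where `x = [b₀; b₁, …, b_k]` and `l = b0 :: bs`, `k = bs.length`. -/
theorem stmt_16 (b0 : ℤ) (bs : List ℤ) (hpos : ∀ b ∈ bs, 1 ≤ b)
    (x : ℚ) (hx : x = cfVal b0 bs) :
    Set.ncard {p : ℤ × ℤ | 0 < p.2 ∧ Int.gcd p.1 p.2 = 1 ∧
        0 < x - (p.1 : ℚ) / p.2 ∧ x - (p.1 : ℚ) / p.2 < 1 / (p.2 : ℚ) ^ 2 ∧
        ¬∃ i ≤ bs.length,
          (p.1 : ℚ) / p.2 = (cnum (b0 :: bs) i : ℚ) / (cden (b0 :: bs) i : ℚ)} ≤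
      bs.length := by
  classical
  set l := b0 :: bs with hl
  set k := bs.length with hkdef
  have hlen : l.length = k + 1 := by simp [hl, hkdef]
  have hg1 : ∀ n, 1 ≤ n → n < l.length → 1 ≤ l.getD n 0 := by
    intro n h1 h2
    obtain ⟨m, rfl⟩ : ∃ m, n = m + 1 := ⟨n - 1, by omega⟩
    rw [hl, stmt16_getD_cons]
    exact stmt16_getD_pos bs hpos m (by rw [hlen] at h2; omega)
  have hg0 : ∀ n, 0 ≤ l.getD (n+1) 0 := by
    intro n; rw [hl, stmt16_getD_cons]; exact stmt16_getD_nonneg bs hpos n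
  set a := cnum l (k+1) with ha
  set q := cden l (k+1) with hqdef
  have hq1 : 1 ≤ q := stmt16_cden_pos l hg1 hg0 (k+1) (by omega) (by omega)
  have hxq : x = (a : ℚ) / (q : ℚ) := by rw [hx]; exact stmt16_cf_val bs b0 hpos
  -- integer form of the approximation inequalities
  have mfacts : ∀ c d : ℤ, 0 < d → 0 < x - (c : ℚ)/(d : ℚ) →
      x - (c : ℚ)/(d : ℚ) < 1/(d : ℚ)^2 → 1 ≤ a*d - c*q ∧ d*(a*d - c*q) < q := by
    intro c d hd h1 h2
    have hdQ : (0:ℚ) < (d:ℚ) := by exact_mod_cast hd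
    have hqQ : (0:ℚ) < (q:ℚ) := by exact_mod_cast (by omega : (0:ℤ) < q)
    have hqd : (0:ℚ) < (q:ℚ) * (d:ℚ) := mul_pos hqQ hdQ
    have hsub : x - (c:ℚ)/(d:ℚ) = ((a*d - c*q : ℤ) : ℚ) / ((q:ℚ) * (d:ℚ)) := by
      rw [hxq]; push_cast; field_simp
    rw [hsub] at h1 h2
    have hm0 : (0:ℚ) < ((a*d - c*q : ℤ) : ℚ) := by
      by_contra hcon; push_neg at hcon
      have : ((a*d - c*q : ℤ):ℚ) / ((q:ℚ)*(d:ℚ)) ≤ 0 :=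
        div_nonpos_of_nonpos_of_nonneg hcon (le_of_lt hqd)
      linarith
    have hm1 : (0:ℤ) < a*d - c*q := by exact_mod_cast hm0
    refine ⟨by omega, ?_⟩
    rw [div_lt_div_iff₀ hqd (by positivity)] at h2
    have h2' : (a*d - c*q) * d^2 < q*d := by
      have : ((a*d - c*q:ℤ):ℚ) * (d:ℚ)^2 < (q:ℚ)*(d:ℚ) := by push_cast at h2 ⊢; linarith
      exact_mod_cast this
    have h3 : (d*(a*d - c*q)) * d < q * d := by nlinarith
    exact lt_of_mul_lt_mul_right h3 (by omega)
  rcases Nat.eq_zero_or_pos k with hk0 | hk1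
  · -- k = 0 : the set is empty
    have hq : q = 1 := by rw [hqdef, hk0]; rfl
    have : {p : ℤ × ℤ | 0 < p.2 ∧ Int.gcd p.1 p.2 = 1 ∧
        0 < x - (p.1 : ℚ) / p.2 ∧ x - (p.1 : ℚ) / p.2 < 1 / (p.2 : ℚ) ^ 2 ∧
        ¬∃ i ≤ k, (p.1 : ℚ) / p.2 = (cnum l i : ℚ) / (cden l i : ℚ)} = ∅ := by
      ext p
      simp only [Set.mem_setOf_eq, Set.mem_empty_iff_false, iff_false, not_and]
      intro hd _ h1 h2 _
      obtain ⟨hm1, hdm⟩ := mfacts p.1 p.2 hd h1 h2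
      nlinarith
    rw [this, Set.ncard_empty]
    omega
  · -- k ≥ 1
    set th : ℕ → ℤ := fun j => (-1)^(j+1) * (a * cden l j - q * cnum l j) with hth
    have hsq : ∀ j : ℕ, ((-1:ℤ)^(j+1)) * ((-1:ℤ)^(j+1)) = 1 := by
      intro j; rw [← pow_add]; exact Even.neg_one_pow ⟨j+1, by ring⟩
    have theta_rec : ∀ j, th j = l.getD (j+1) 0 * th (j+1) + th (j+2) := by
      intro j
      simp only [hth]
      rw [show cden l (j+2) = l.getD (j+1) 0 * cden l (j+1) + cden l j from rfl,
        show cnum l (j+2) = l.getD (j+1) 0 * cnum l (j+1) + cnum l j from rfl,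
        pow_succ ((-1:ℤ)) (j+2), pow_succ ((-1:ℤ)) (j+1)]
      ring
    have theta_k : th k = 1 := by
      simp only [hth]
      linear_combination ((-1:ℤ)^(k+1)) * stmt16_det l k + hsq k
    have theta_k1 : th (k+1) = 0 := by simp only [hth]; ring
    have theta_pos : ∀ nn j, j + nn = k → 1 ≤ th j := by
      intro nn
      induction nn using Nat.strong_induction_on with
      | _ nn ih =>
        intro j hj
        match nn with
        | 0 =>
          have : j = k := by omega
          subst this; omega
        | 1 =>
          rw [theta_rec j, show j + 2 = k + 1 by omega, show j + 1 = k by omega,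
            theta_k, theta_k1]
          have := hg1 k (by omega) (by omega)
          linarith
        | (nn+2) =>
          rw [theta_rec j]
          have h1 := ih (nn+1) (by omega) (j+1) (by omega)
          have h2 := ih nn (by omega) (j+2) (by omega)
          have h3 := hg1 (j+1) (by omega) (by omega)
          nlinarith
    have theta_pos' : ∀ j, j ≤ k → 1 ≤ th j := fun j hj => theta_pos (k - j) j (by omega)
    have theta_nonneg : ∀ j, j ≤ k + 1 → 0 ≤ th j := by
      intro j hj
      rcases Nat.lt_or_ge j (k+1) with h | h
      · have := theta_pos' j (by omega); omega
      · have : j = k + 1 := by omega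
        rw [this, theta_k1]
    have qid : ∀ j, j ≤ k → cden l (j+1) * th j + cden l j * th (j+1) = q := by
      intro j
      induction j with
      | zero =>
        intro _
        simp only [hth]
        rw [show cden l 0 = 0 from rfl, show cnum l 0 = 1 from rfl,
          show cden l 1 = 1 from rfl]
        ring
      | succ j ihj =>
        intro hj
        have ih := ihj (by omega)
        rw [show cden l (j+2) = l.getD (j+1) 0 * cden l (j+1) + cden l j from rfl]
        linear_combination ih - cden l (j+1) * theta_rec j
    -- the classification of non-convergent solutions
    have classify : ∀ c d : ℤ, 0 < d → Int.gcd c d = 1 → 1 ≤ a*d - c*q →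
        d*(a*d - c*q) < q →
        (¬∃ i ≤ k, (c:ℚ)/(d:ℚ) = (cnum l i : ℚ)/(cden l i : ℚ)) →
        ∃ n : ℕ, ∃ s : ℤ, Odd n ∧ n + 1 ≤ k ∧
          (s = 1 ∨ s = l.getD (n+1) 0 - 1) ∧ 1 ≤ s ∧
          c = s * cnum l (n+1) + cnum l n ∧
          d = s * cden l (n+1) + cden l n ∧
          n + 1 = Nat.findGreatest (fun i => cden l i ≤ d) k ∧
          s = c * cden l n - d * cnum l n := by
      intro c d hd0 hgcd hm1 hdm hnc
      set m := a*d - c*q with hm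
      set P : ℕ → Prop := fun i => cden l i ≤ d with hP
      have hP1 : P 1 := by show cden l 1 ≤ d; show (1:ℤ) ≤ d; omega
      have hi1 : 1 ≤ Nat.findGreatest P k := Nat.le_findGreatest hk1 hP1
      have hik : Nat.findGreatest P k ≤ k := Nat.findGreatest_le k
      have hKi : cden l (Nat.findGreatest P k) ≤ d := Nat.findGreatest_spec hk1 hP1
      have hdq : d < q := by nlinarith
      have hKi1 : d < cden l (Nat.findGreatest P k + 1) := by
        rcases eq_or_lt_of_le hik with heq | hlt
        · rw [heq]; exact hdq
        · have := Nat.findGreatest_is_greatest (P := P)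
            (Nat.lt_succ_self (Nat.findGreatest P k)) (by omega)
          simpa [hP] using this
      obtain ⟨n, hn⟩ : ∃ n, Nat.findGreatest P k = n + 1 := ⟨Nat.findGreatest P k - 1, by omega⟩
      rw [hn] at hKi hKi1 hi1 hik
      set b := l.getD (n+1) 0 with hbdef
      have hb : 1 ≤ b := hg1 (n+1) (by omega) (by omega)
      have hK2 : cden l (n+2) = b * cden l (n+1) + cden l n := rfl
      have hdet := stmt16_det l n
      have hA : th n = b * th (n+1) + th (n+2) := theta_rec n
      have hB : 1 ≤ th (n+1) := theta_pos' (n+1) (by omega)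
      have hC : 0 ≤ th (n+2) := theta_nonneg (n+2) (by omega)
      have hqid : q = cden l (n+1) * th n + cden l n * th (n+1) := (qid n (by omega)).symm
      have hK : 1 ≤ cden l (n+1) := stmt16_cden_pos l hg1 hg0 (n+1) (by omega) (by omega)
      have hK'0 : 0 ≤ cden l n := stmt16_cden_nonneg l hg0 n
      have hKK' : cden l n ≤ cden l (n+1) := stmt16_cden_mono l hg1 hg0 n (by omega)
      set s := (-1:ℤ)^(n+1) * (c * cden l n - d * cnum l n) with hs_def
      set t := (-1:ℤ)^(n+1) * (d * cnum l (n+1) - c * cden l (n+1)) with ht_def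
      have hc_eq : c = s * cnum l (n+1) + t * cnum l n := by
        rw [hs_def, ht_def]
        linear_combination (-(c * (-1:ℤ)^(n+1))) * hdet + (-c) * hsq n
      have hd_eq : d = s * cden l (n+1) + t * cden l n := by
        rw [hs_def, ht_def]
        linear_combination (-(d * (-1:ℤ)^(n+1))) * hdet + (-d) * hsq n
      have hm_eq : m = s * (a * cden l (n+1) - q * cnum l (n+1))
          + t * (a * cden l n - q * cnum l n) := by
        rw [hm]
        linear_combination a * hd_eq + (-q) * hc_eq
      have hgcd_st : Int.gcd s t = 1 := by
        have h1 : (Int.gcd s t : ℤ) ∣ c := by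
          rw [hc_eq]
          exact dvd_add (Dvd.dvd.mul_right (Int.gcd_dvd_left s t) _)
            (Dvd.dvd.mul_right (Int.gcd_dvd_right s t) _)
        have h2 : (Int.gcd s t : ℤ) ∣ d := by
          rw [hd_eq]
          exact dvd_add (Dvd.dvd.mul_right (Int.gcd_dvd_left s t) _)
            (Dvd.dvd.mul_right (Int.gcd_dvd_right s t) _)
        have h3 : (Int.gcd s t : ℤ) ∣ (Int.gcd c d : ℤ) := Int.dvd_coe_gcd h1 h2
        rw [hgcd] at h3
        have h4 : Int.gcd s t ∣ 1 := by exact_mod_cast h3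
        exact Nat.dvd_one.mp h4
      have hdm' : d * m < cden l (n+1) * th n + cden l n * th (n+1) := by rw [← hqid]; exact hdm
      have hdhigh : d < b * cden l (n+1) + cden l n := by rw [← hK2]; exact hKi1
      rcases Nat.even_or_odd n with hev | hodd
      · -- n even : upper-side bucket, only the convergent. Contradiction.
        exfalso
        have hs1 : (-1:ℤ)^(n+1) = -1 := Odd.neg_one_pow (Even.add_one hev)
        have hs2 : (-1:ℤ)^(n+2) = 1 := Even.neg_one_pow (by
          obtain ⟨w, hw⟩ := hev; exact ⟨w+1, by omega⟩)
        have hB' : th (n+1) = a * cden l (n+1) - q * cnum l (n+1) := by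
          simp only [hth]; rw [hs2]; ring
        have hA' : th n = -(a * cden l n - q * cnum l n) := by
          simp only [hth]; rw [hs1]; ring
        have hm2 : m = s * th (n+1) - t * th n := by
          rw [hB', hA']; linear_combination hm_eq
        obtain ⟨hs_one, ht_zero⟩ := stmt16_cruxB (cden l (n+1)) (cden l n) (th n)
          (th (n+1)) (th (n+2)) b s t d m hK hK'0 hKK' hb hB hC hA hd_eq hKi hdhigh
          hm2 hm1 hdm' hgcd_st
        apply hnc
        refine ⟨n+1, by omega, ?_⟩
        rw [show c = cnum l (n+1) by rw [hc_eq, hs_one, ht_zero]; ring,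
          show d = cden l (n+1) by rw [hd_eq, hs_one, ht_zero]; ring]
      · -- n odd : lower-side bucket
        have hs1 : (-1:ℤ)^(n+1) = 1 := Even.neg_one_pow (Odd.add_one hodd)
        have hs2 : (-1:ℤ)^(n+2) = -1 := Odd.neg_one_pow (by
          obtain ⟨w, hw⟩ := hodd; exact ⟨w+1, by omega⟩)
        have hB' : th (n+1) = -(a * cden l (n+1) - q * cnum l (n+1)) := by
          simp only [hth]; rw [hs2]; ring
        have hA' : th n = a * cden l n - q * cnum l n := by
          simp only [hth]; rw [hs1]; ring
        have hm2 : m = t * th n - s * th (n+1) := by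
          rw [hB', hA']; linear_combination hm_eq
        obtain ⟨ht_one, hs_cases⟩ := stmt16_cruxA (cden l (n+1)) (cden l n) (th n)
          (th (n+1)) (th (n+2)) b s t d m hK hK'0 hKK' hb hB hC hA hd_eq hKi hdhigh
          hm2 hm1 hdm'
        by_cases hs0 : s = 0
        · exfalso
          apply hnc
          refine ⟨n, by omega, ?_⟩
          rw [show c = cnum l n by rw [hc_eq, hs0, ht_one]; ring,
            show d = cden l n by rw [hd_eq, hs0, ht_one]; ring]
        · have hs_or : s = 1 ∨ s = b - 1 := by
            rcases hs_cases with h | h | h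
            · exact absurd h hs0
            · exact Or.inl h
            · exact Or.inr h
          have hs_ge : 1 ≤ s := by
            rcases hs_or with h | h
            · omega
            · omega
          refine ⟨n, s, hodd, by omega, hs_or, hs_ge, ?_, ?_, by rw [hn], ?_⟩
          · rw [hc_eq, ht_one]; ring
          · rw [hd_eq, ht_one]; ring
          · rw [hs_def, hs1]; ring
    -- the counting via an injection into Finset.range k
    set f : ℤ × ℤ → ℕ := fun p =>
      (Nat.findGreatest (fun i => cden l i ≤ p.2) k - 2) +
      (if p.1 * cden l (Nat.findGreatest (fun i => cden l i ≤ p.2) k - 1)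
          - p.2 * cnum l (Nat.findGreatest (fun i => cden l i ≤ p.2) k - 1) = 1
        then 0 else 1) with hf_def
    have hclass : ∀ p : ℤ × ℤ, p ∈ {p : ℤ × ℤ | 0 < p.2 ∧ Int.gcd p.1 p.2 = 1 ∧
        0 < x - (p.1 : ℚ) / p.2 ∧ x - (p.1 : ℚ) / p.2 < 1 / (p.2 : ℚ) ^ 2 ∧
        ¬∃ i ≤ k, (p.1 : ℚ) / p.2 = (cnum l i : ℚ) / (cden l i : ℚ)} →
        ∃ n : ℕ, ∃ s : ℤ, Odd n ∧ n + 1 ≤ k ∧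
          (s = 1 ∨ s = l.getD (n+1) 0 - 1) ∧ 1 ≤ s ∧
          p.1 = s * cnum l (n+1) + cnum l n ∧
          p.2 = s * cden l (n+1) + cden l n ∧
          f p = (n - 1) + (if s = 1 then 0 else 1) := by
      intro p hp
      simp only [Set.mem_setOf_eq] at hp
      obtain ⟨hd0, hgcd, h1, h2, hnc⟩ := hp
      obtain ⟨hm1, hdm⟩ := mfacts p.1 p.2 hd0 h1 h2
      obtain ⟨n, s, hodd, hnk, hs_or, hs_ge, hc_eq, hd_eq, hfind, hs_formula⟩ :=
        classify p.1 p.2 hd0 hgcd hm1 hdm hnc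
      refine ⟨n, s, hodd, hnk, hs_or, hs_ge, hc_eq, hd_eq, ?_⟩
      rw [hf_def]
      have hx1 : Nat.findGreatest (fun i => cden l i ≤ p.2) k = n + 1 := hfind.symm
      simp only [hx1]
      rw [show n + 1 - 2 = n - 1 by omega, show n + 1 - 1 = n from rfl]
      congr 1
      rw [← hs_formula]
    have hmaps : ∀ p ∈ {p : ℤ × ℤ | 0 < p.2 ∧ Int.gcd p.1 p.2 = 1 ∧
        0 < x - (p.1 : ℚ) / p.2 ∧ x - (p.1 : ℚ) / p.2 < 1 / (p.2 : ℚ) ^ 2 ∧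
        ¬∃ i ≤ k, (p.1 : ℚ) / p.2 = (cnum l i : ℚ) / (cden l i : ℚ)},
        f p ∈ (Finset.range k : Set ℕ) := by
      intro p hp
      obtain ⟨n, s, hodd, hnk, _, _, _, _, hfp⟩ := hclass p hp
      obtain ⟨w, hw⟩ := hodd
      simp only [Finset.mem_coe, Finset.mem_range]
      rw [hfp]
      split_ifs <;> omega
    have hinj : Set.InjOn f {p : ℤ × ℤ | 0 < p.2 ∧ Int.gcd p.1 p.2 = 1 ∧
        0 < x - (p.1 : ℚ) / p.2 ∧ x - (p.1 : ℚ) / p.2 < 1 / (p.2 : ℚ) ^ 2 ∧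
        ¬∃ i ≤ k, (p.1 : ℚ) / p.2 = (cnum l i : ℚ) / (cden l i : ℚ)} := by
      intro p1 hp1 p2 hp2 hfeq
      obtain ⟨n1, s1, hodd1, hnk1, hor1, hge1, hc1, hd1, hfp1⟩ := hclass p1 hp1
      obtain ⟨n2, s2, hodd2, hnk2, hor2, hge2, hc2, hd2, hfp2⟩ := hclass p2 hp2
      rw [hfp1, hfp2] at hfeq
      obtain ⟨w1, hw1⟩ := hodd1
      obtain ⟨w2, hw2⟩ := hodd2
      have hn12 : n1 = n2 ∧ ((s1 = 1) ↔ (s2 = 1)) := by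
        constructor
        · split_ifs at hfeq <;> omega
        · constructor <;> intro h <;> by_contra hcon <;> simp [h, hcon] at hfeq <;> omega
      obtain ⟨rfl, hiff⟩ := hn12
      have hs12 : s1 = s2 := by
        by_cases h : s1 = 1
        · rw [h, (hiff.mp h).symm]
        · have h2 : ¬ s2 = 1 := fun hh => h (hiff.mpr hh)
          rcases hor1 with hh | hh
          · exact absurd hh h
          · rcases hor2 with hh2 | hh2
            · exact absurd hh2 h2
            · rw [hh, hh2]
        
      apply Prod.ext
      · rw [hc1, hc2, hs12]
      · rw [hd1, hd2, hs12]
    have hfin : ((Finset.range k : Set ℕ)).Finite := Finset.finite_toSet _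
    refine le_trans (Set.ncard_le_ncard_of_injOn f hmaps hinj hfin) ?_
    show ((Finset.range k : Finset ℕ) : Set ℕ).ncard ≤ k
    rw [Set.ncard_coe_finset, Finset.card_range]
end
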